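/- Let Δ : D → ℝ≥0 be defined on D = {0, 2, 6, 14, …, γ} (where each next index is 2d+2) and suppose Δ_d ≤ Y_d + Z·√(Δ_{2d+2}) for all d ∈ D \ {γ}, with Y_d, Z ≥ 0. Then Δ₀ ≤ ∑_{d ∈ D \ {γ}} Z^{2d/(2+d)}·Y_d^{2/(2+d)} + Z^{2γ/(2+γ)}·Δ_γ^{2/(2+γ)}. -/

import Mathlib

lemma my_rpow_add_le (a b : ℝ) (ha : 0 ≤ a) (hb : 0 ≤ b) {p : ℝ} (hp : 0 ≤ p) (hp1 : p ≤ 1) :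
    (a + b) ^ p ≤ a ^ p + b ^ p := by
  lift a to NNReal using ha
  lift b to NNReal using hb
  have := NNReal.rpow_add_le_add_rpow a b hp hp1
  exact_mod_cast this

theorem recursion_unrolling (d : ℕ → ℕ) (hd0 : d 0 = 0) (hd : ∀ k, d (k + 1) = 2 * d k + 2)
    (N : ℕ) (γ : ℕ) (hγ : γ = d N)
    (Δ Y : ℕ → ℝ) (Z : ℝ) (hZ : 0 ≤ Z)
    (hΔ : ∀ k ≤ N, 0 ≤ Δ (d k)) (hY : ∀ k < N, 0 ≤ Y (d k))
    (hrec : ∀ k < N, Δ (d k) ≤ Y (d k) + Z * Real.sqrt (Δ (d (k + 1)))) :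
    Δ 0 ≤ (∑ k ∈ Finset.range N,
        Z ^ ((2 * d k : ℝ) / (2 + d k)) * Y (d k) ^ ((2 : ℝ) / (2 + d k)))
      + Z ^ ((2 * γ : ℝ) / (2 + γ)) * Δ γ ^ ((2 : ℝ) / (2 + γ)) := by
  subst hγ
  have key : ∀ m, m ≤ N → Δ (d 0) ≤ (∑ k ∈ Finset.range m,
        Z ^ ((2 * d k : ℝ) / (2 + d k)) * Y (d k) ^ ((2 : ℝ) / (2 + d k)))
      + Z ^ ((2 * d m : ℝ) / (2 + d m)) * Δ (d m) ^ ((2 : ℝ) / (2 + d m)) := by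
    intro m
    induction m with
    | zero =>
      intro _
      simp [hd0]
    | succ m ih =>
      intro hm
      have hmN : m < N := hm
      have hm' : m ≤ N := le_of_lt hmN
      set A : ℝ := (d m : ℝ) with hA
      have hA0 : 0 ≤ A := by positivity
      have h2A : (0:ℝ) < 2 + A := by positivity
      have hcast : ((d (m + 1) : ℕ) : ℝ) = 2 * A + 2 := by
        rw [hd m]; push_cast; ring
      set c : ℝ := 2 * A / (2 + A) with hc
      set e : ℝ := 2 / (2 + A) with he
      have he0 : 0 < e := by positivity
      have he1 : e ≤ 1 := by
        rw [he, div_le_one h2A]; linarith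
      have hc0 : 0 ≤ c := by positivity
      -- exponent identities
      have hE1 : (2 : ℝ) / (2 + (d (m + 1) : ℝ)) = e / 2 := by
        rw [hcast, he]; field_simp; ring
      have hE2 : (2 * (d (m + 1) : ℝ)) / (2 + (d (m + 1) : ℝ)) = c + e := by
        rw [hcast, hc, he]; field_simp; ring
      have hΔm : 0 ≤ Δ (d m) := hΔ m hm'
      have hΔm1 : 0 ≤ Δ (d (m + 1)) := hΔ (m + 1) hm
      have hYm : 0 ≤ Y (d m) := hY m hmN
      have hB : 0 ≤ Z * Real.sqrt (Δ (d (m + 1))) := by positivity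
      -- step 1 : Δ (d m) ^ e ≤ Y ^ e + Z ^ e * Δ' ^ (e/2)
      have h1 : Δ (d m) ^ e ≤ Y (d m) ^ e + Z ^ e * Δ (d (m + 1)) ^ (e / 2) := by
        have ha : Δ (d m) ^ e ≤ (Y (d m) + Z * Real.sqrt (Δ (d (m + 1)))) ^ e :=
          Real.rpow_le_rpow hΔm (hrec m hmN) he0.le
        have hb : (Y (d m) + Z * Real.sqrt (Δ (d (m + 1)))) ^ e
            ≤ Y (d m) ^ e + (Z * Real.sqrt (Δ (d (m + 1)))) ^ e :=
          my_rpow_add_le _ _ hYm hB he0.le he1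
        have hcalc : (Z * Real.sqrt (Δ (d (m + 1)))) ^ e
            = Z ^ e * Δ (d (m + 1)) ^ (e / 2) := by
          rw [Real.mul_rpow hZ (Real.sqrt_nonneg _), Real.sqrt_eq_rpow,
            ← Real.rpow_mul hΔm1, one_div, inv_mul_eq_div]
        calc Δ (d m) ^ e ≤ _ := ha
          _ ≤ _ := hb
          _ = _ := by rw [hcalc]
      -- step 2: multiply by Z ^ c
      have h2 : Z ^ c * Δ (d m) ^ e
          ≤ Z ^ c * Y (d m) ^ e + Z ^ (c + e) * Δ (d (m + 1)) ^ (e / 2) := by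
        have := mul_le_mul_of_nonneg_left h1 (Real.rpow_nonneg hZ c)
        have hZce : Z ^ (c + e) = Z ^ c * Z ^ e := by
          apply Real.rpow_add' hZ
          have : 0 < c + e := by positivity
          exact this.ne'
        calc Z ^ c * Δ (d m) ^ e
            ≤ Z ^ c * (Y (d m) ^ e + Z ^ e * Δ (d (m + 1)) ^ (e / 2)) := this
          _ = Z ^ c * Y (d m) ^ e + Z ^ (c + e) * Δ (d (m + 1)) ^ (e / 2) := by
              rw [hZce]; ring
      calc Δ (d 0) ≤ (∑ k ∈ Finset.range m,
            Z ^ ((2 * d k : ℝ) / (2 + d k)) * Y (d k) ^ ((2 : ℝ) / (2 + d k)))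
          + Z ^ c * Δ (d m) ^ e := ih hm'
        _ ≤ (∑ k ∈ Finset.range m,
            Z ^ ((2 * d k : ℝ) / (2 + d k)) * Y (d k) ^ ((2 : ℝ) / (2 + d k)))
          + (Z ^ c * Y (d m) ^ e + Z ^ (c + e) * Δ (d (m + 1)) ^ (e / 2)) := by
            exact add_le_add (le_refl _) h2
        _ = (∑ k ∈ Finset.range (m + 1),
            Z ^ ((2 * d k : ℝ) / (2 + d k)) * Y (d k) ^ ((2 : ℝ) / (2 + d k)))
          + Z ^ ((2 * (d (m + 1) : ℝ)) / (2 + (d (m + 1) : ℝ)))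
            * Δ (d (m + 1)) ^ ((2 : ℝ) / (2 + (d (m + 1) : ℝ))) := by
            rw [Finset.sum_range_succ, hE1, hE2]; ring
  have := key N le_rfl
  rwa [hd0] at this
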